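/- arXiv:2307.03750 — 2 statements merged into one kernel-verified Lean document; each statement's English description precedes it below -/
import Mathlib

section
/- Let G(V) be an ADMG, A, Y disjoint subsets of V, and suppose D is a district of the induced subgraph G_{Y*} that is not an intrinsic set of G(V). Let R = {d ∈ D : d has no directed-edge children inside D in the induced subgraph G_D}, and let ⟨D⟩ be the reachable closure of D in G(V). Then D and ⟨D⟩ are both R-rooted C-forests in G(V), and the pair (D, ⟨D⟩) forms a hedge for (Y, A) in G(V). -/
/-- A conditional acyclic directed mixed graph (CADMG) on vertex type `V`:
a directed edge relation `dir` with no directed cycles, a symmetric irreflexive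
bidirected edge relation `bi`, and a set `rnd` of random vertices (the remaining
vertices being fixed), such that no directed edge points into a fixed vertex and
no bidirected edge is incident to a fixed vertex.  An ADMG is the special case
`rnd = Set.univ`. -/
structure CADMG (V : Type*) where
  dir : V → V → Prop
  bi : V → V → Prop
  rnd : Set V
  acyclic : ∀ v, ¬ Relation.TransGen dir v v
  bi_symm : ∀ a b, bi a b → bi b a
  bi_irrefl : ∀ a, ¬ bi a a
  dir_rnd : ∀ a b, dir a b → b ∈ rnd
  bi_rnd : ∀ a b, bi a b → a ∈ rnd ∧ b ∈ rnd

namespace CADMG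

variable {V : Type*}

/-- A random vertex `r` is fixable if there is no other vertex `w` with both a
directed path from `r` to `w` and a bidirected path from `r` to `w`. -/
def Fixable (G : CADMG V) (r : V) : Prop :=
  r ∈ G.rnd ∧
    ¬ ∃ w, w ≠ r ∧ Relation.ReflTransGen G.dir r w ∧ Relation.ReflTransGen G.bi r w

/-- The fixing operator: move `r` from the random to the fixed vertices and delete
all directed edges into `r` and all bidirected edges incident to `r`. -/
def fix (G : CADMG V) (r : V) : CADMG V where
  dir a b := G.dir a b ∧ b ≠ r
  bi a b := G.bi a b ∧ a ≠ r ∧ b ≠ r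
  rnd := G.rnd \ {r}
  acyclic v h := G.acyclic v (Relation.TransGen.mono (fun _ _ hab => hab.1) v v h)
  bi_symm a b h := ⟨G.bi_symm a b h.1, h.2.2, h.2.1⟩
  bi_irrefl a h := G.bi_irrefl a h.1
  dir_rnd a b h := ⟨G.dir_rnd a b h.1, h.2⟩
  bi_rnd a b h := ⟨⟨(G.bi_rnd a b h.1).1, h.2.1⟩, (G.bi_rnd a b h.1).2, h.2.2⟩

/-- A sequence of vertices is a valid fixing sequence if it is empty, or its head is
fixable and its tail is valid in the graph obtained by fixing the head. -/
def Valid (G : CADMG V) : List V → Prop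
  | [] => True
  | r :: rest => G.Fixable r ∧ (G.fix r).Valid rest

/-- `φ_σ(G)`: the CADMG obtained by applying the fixing operators along the list `σ`. -/
def fixList (G : CADMG V) : List V → CADMG V
  | [] => G
  | r :: rest => (G.fix r).fixList rest

/-- A set `R` of random vertices is reachable if some ordering of the remaining random
vertices is a valid fixing sequence. -/
def Reachable (G : CADMG V) (R : Set V) : Prop :=
  ∃ σ : List V, G.Valid σ ∧ ∀ v, v ∈ σ ↔ v ∈ G.rnd \ R

/-- `C` is the reachable closure of `S`: the smallest reachable superset of `S`. -/
def IsReachableClosure (G : CADMG V) (S C : Set V) : Prop :=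
  G.Reachable C ∧ S ⊆ C ∧ ∀ T, G.Reachable T → S ⊆ T → C ⊆ T

/-- `D` is bidirected-connected (within `D` itself): `D` is nonempty and any two of its
elements are joined by a bidirected path staying inside `D`. -/
def BiConnected (G : CADMG V) (D : Set V) : Prop :=
  D.Nonempty ∧ ∀ a ∈ D, ∀ b ∈ D,
    Relation.ReflTransGen (fun x y => G.bi x y ∧ x ∈ D ∧ y ∈ D) a b

/-- An intrinsic set: reachable and bidirected-connected. -/
def Intrinsic (G : CADMG V) (R : Set V) : Prop :=
  G.Reachable R ∧ G.BiConnected R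

/-- The induced subgraph on a set `W` of vertices (vertices outside `W` become fixed
and lose all their edges). -/
def induce (G : CADMG V) (W : Set V) : CADMG V where
  dir a b := G.dir a b ∧ a ∈ W ∧ b ∈ W
  bi a b := G.bi a b ∧ a ∈ W ∧ b ∈ W
  rnd := G.rnd ∩ W
  acyclic v h := G.acyclic v (Relation.TransGen.mono (fun _ _ hab => hab.1) v v h)
  bi_symm a b h := ⟨G.bi_symm a b h.1, h.2.2, h.2.1⟩
  bi_irrefl a h := G.bi_irrefl a h.1
  dir_rnd a b h := ⟨G.dir_rnd a b h.1, h.2.2⟩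
  bi_rnd a b h := ⟨⟨(G.bi_rnd a b h.1).1, h.2.1⟩, (G.bi_rnd a b h.1).2, h.2.2⟩

/-- The districts of a CADMG: the connected components of its random vertices under
the bidirected edge relation. -/
def District (G : CADMG V) (D : Set V) : Prop :=
  ∃ v ∈ G.rnd, D = {w | Relation.ReflTransGen G.bi v w}

/-- `Y*`: the set of vertices having a directed path (possibly of length zero) to an
element of `Y` that does not intersect `A`. -/
def Ystar (G : CADMG V) (A Y : Set V) : Set V :=
  {v | ∃ y ∈ Y, Relation.ReflTransGen (fun a b => G.dir a b ∧ a ∉ A ∧ b ∉ A) v y}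

/-- `F` is an `R`-rooted C-forest: `R ⊆ F`, `F` is bidirected-connected in the induced
subgraph `G_F`, and there is a subgraph of `G_F` with vertex set `F` and a subset `E` of
its directed edges in which every element of `F` has a directed path (possibly of
length zero) to an element of `R`. -/
def CForest (G : CADMG V) (R F : Set V) : Prop :=
  R ⊆ F ∧ G.BiConnected F ∧
    ∃ E : V → V → Prop,
      (∀ a b, E a b → G.dir a b ∧ a ∈ F ∧ b ∈ F) ∧
      ∀ f ∈ F, ∃ r ∈ R, Relation.ReflTransGen E f r

/-- A hedge for `(Y, A)` in `G`: a pair `(F, F')` of `R`-rooted C-forests, for some common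
root set `R`, with `F ⊊ F'`, `F ∩ A = ∅`, `A ∩ (F' \ F) ≠ ∅`, and every element of `R`
has a directed path to an element of `Y` that does not intersect `A`. -/
def Hedge (G : CADMG V) (Y A : Set V) : Prop :=
  ∃ R F F', G.CForest R F ∧ G.CForest R F' ∧ F ⊂ F' ∧ F ∩ A = ∅ ∧
    (A ∩ (F' \ F)).Nonempty ∧
    ∀ r ∈ R, ∃ y ∈ Y, Relation.ReflTransGen (fun a b => G.dir a b ∧ a ∉ A ∧ b ∉ A) r y

end CADMG


namespace CADMG
variable {V : Type*}

lemma fixList_dir' (σ : List V) (G : CADMG V) (a b : V) :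
    (G.fixList σ).dir a b ↔ G.dir a b ∧ b ∉ σ := by
  induction σ generalizing G with
  | nil => simp [fixList]
  | cons r σ ih => simp only [fixList, ih, fix, List.mem_cons]; tauto

lemma fixList_bi' (σ : List V) (G : CADMG V) (a b : V) :
    (G.fixList σ).bi a b ↔ G.bi a b ∧ a ∉ σ ∧ b ∉ σ := by
  induction σ generalizing G with
  | nil => simp [fixList]
  | cons r σ ih => simp only [fixList, ih, fix, List.mem_cons]; tauto

lemma fixList_rnd' (σ : List V) (G : CADMG V) (a : V) :
    a ∈ (G.fixList σ).rnd ↔ a ∈ G.rnd ∧ a ∉ σ := by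
  induction σ generalizing G with
  | nil => simp [fixList]
  | cons r σ ih =>
      simp only [fixList, ih, fix, List.mem_cons, Set.mem_diff, Set.mem_singleton_iff]; tauto

lemma valid_append (σ τ : List V) (G : CADMG V) :
    G.Valid (σ ++ τ) ↔ G.Valid σ ∧ (G.fixList σ).Valid τ := by
  induction σ generalizing G with
  | nil => simp [Valid, fixList]
  | cons r σ ih =>
      show G.Fixable r ∧ (G.fix r).Valid (σ ++ τ) ↔ _
      rw [ih, Valid, fixList, and_assoc]


lemma exists_sink [Fintype V] (e : V → V → Prop)
    (hac : ∀ v, ¬ Relation.TransGen e v v) (M : Set V) (hM : M.Nonempty) :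
    ∃ c ∈ M, ∀ w ∈ M, ¬ Relation.TransGen e c w := by
  have ht : IsTrans V (fun x y => Relation.TransGen e y x) :=
    ⟨fun a b c h1 h2 => h2.trans h1⟩
  have hi : IsIrrefl V (fun x y => Relation.TransGen e y x) := ⟨fun a h => hac a h⟩
  have hwf : WellFounded (fun x y => Relation.TransGen e y x) :=
    @Finite.wellFounded_of_trans_of_irrefl V _ _ ht hi
  obtain ⟨c, hc, hmin⟩ := hwf.has_min M hM
  exact ⟨c, hc, fun w hw h => hmin w hw h⟩

lemma transGen_last {r : V → V → Prop} {P : V → Prop} (hP : ∀ a b, r a b → P b)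
    {a b : V} (h : Relation.TransGen r a b) : P b := by
  induction h with
  | single h => exact hP _ _ h
  | tail _ h _ => exact hP _ _ h

lemma rtg_within {r : V → V → Prop} {v0 a : V} (h : Relation.ReflTransGen r v0 a) :
    Relation.ReflTransGen
      (fun x y => r x y ∧ Relation.ReflTransGen r v0 x ∧ Relation.ReflTransGen r v0 y)
      v0 a := by
  induction h with
  | refl => exact .refl
  | tail h1 h2 ih => exact ih.tail ⟨h2, h1, h1.tail h2⟩

lemma reachable_down [Fintype V] (G : CADMG V) (hG : G.rnd = Set.univ)
    (C T : Set V) (hTC : T ⊆ C) (hreach : G.Reachable C)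
    (hfix : ∀ S : Set V, T ⊆ S → S ⊆ C → (S \ T).Nonempty →
      ∃ c ∈ S \ T, ¬ ∃ w, w ≠ c ∧
        Relation.ReflTransGen (fun a b => G.dir a b ∧ b ∈ S) c w ∧
        Relation.ReflTransGen (fun a b => G.bi a b ∧ a ∈ S ∧ b ∈ S) c w) :
    G.Reachable T := by
  suffices h : ∀ n (S : Set V), T ⊆ S → S ⊆ C → G.Reachable S → (S \ T).ncard ≤ n →
      G.Reachable T by
    exact h (C \ T).ncard C hTC le_rfl hreach le_rfl
  intro n
  induction n with
  | zero =>
      intro S hTS hSC hS hcard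
      have he : S \ T = ∅ := (Set.ncard_eq_zero (Set.toFinite _)).mp (Nat.le_zero.mp hcard)
      have : S = T := le_antisymm (Set.diff_eq_empty.mp he) hTS
      rwa [this] at hS
  | succ n ih =>
      intro S hTS hSC hS hcard
      by_cases hne : (S \ T).Nonempty
      · obtain ⟨c, hcST, hcfix⟩ := hfix S hTS hSC hne
        obtain ⟨σ, hσv, hσm⟩ := hS
        have hcS : c ∈ S := hcST.1
        have hcσ : c ∉ σ := fun h => ((hσm c).mp h).2 hcS
        have hdirIff : ∀ a b, (G.fixList σ).dir a b ↔ (G.dir a b ∧ b ∈ S) := by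
          intro a b
          rw [fixList_dir']
          constructor
          · rintro ⟨h1, h2⟩
            refine ⟨h1, ?_⟩
            by_contra hb
            exact h2 ((hσm b).mpr ⟨by rw [hG]; trivial, hb⟩)
          · rintro ⟨h1, h2⟩
            exact ⟨h1, fun h => ((hσm b).mp h).2 h2⟩
        have hbiIff : ∀ a b, (G.fixList σ).bi a b ↔ (G.bi a b ∧ a ∈ S ∧ b ∈ S) := by
          intro a b
          rw [fixList_bi']
          constructor
          · rintro ⟨h1, h2, h3⟩
            refine ⟨h1, ?_, ?_⟩ <;> by_contra hb
            · exact h2 ((hσm a).mpr ⟨by rw [hG]; trivial, hb⟩)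
            · exact h3 ((hσm b).mpr ⟨by rw [hG]; trivial, hb⟩)
          · rintro ⟨h1, h2, h3⟩
            exact ⟨h1, fun h => ((hσm a).mp h).2 h2, fun h => ((hσm b).mp h).2 h3⟩
        have hfxb : (G.fixList σ).Fixable c := by
          refine ⟨(fixList_rnd' σ G c).mpr ⟨by rw [hG]; trivial, hcσ⟩, ?_⟩
          rintro ⟨w, hw, hd, hb⟩
          exact hcfix ⟨w, hw, Relation.ReflTransGen.mono (fun a b h => (hdirIff a b).mp h) _ _ hd,
            Relation.ReflTransGen.mono (fun a b h => (hbiIff a b).mp h) _ _ hb⟩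
        have hS' : G.Reachable (S \ {c}) := by
          refine ⟨σ ++ [c], (valid_append σ [c] G).mpr ⟨hσv, hfxb, trivial⟩, ?_⟩
          intro v
          simp only [List.mem_append, List.mem_singleton, hσm v, hG, Set.mem_diff,
            Set.mem_univ, true_and, Set.mem_singleton_iff]
          tauto
        have hT' : T ⊆ S \ {c} := fun x hx =>
          ⟨hTS hx, fun h => hcST.2 (h ▸ hx)⟩
        have hcard' : ((S \ {c}) \ T).ncard ≤ n := by
          have : (S \ {c}) \ T = (S \ T) \ {c} := by
            ext x; simp [Set.mem_diff]; tauto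
          rw [this]
          have hlt : ((S \ T) \ {c}).ncard < (S \ T).ncard :=
            Set.ncard_diff_singleton_lt_of_mem hcST
          omega
        exact ih (S \ {c}) hT' (fun x hx => hSC hx.1) hS' hcard'
      · have he : S \ T = ∅ := Set.not_nonempty_iff_eq_empty.mp hne
        have : S = T := le_antisymm (Set.diff_eq_empty.mp he) hTS
        rwa [this] at hS

end CADMG

/-- If `D` is a district of `G_{Y*}` that is not intrinsic in `G`,
`R` is the set of elements of `D` without directed-edge children inside `D` (in `G_D`),
and `⟨D⟩` is the reachable closure of `D`, then `D` and `⟨D⟩` are both `R`-rooted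
C-forests and the pair `(D, ⟨D⟩)` forms a hedge for `(Y, A)` in `G`. -/
theorem district_not_intrinsic_gives_hedge
    {V : Type*} [Fintype V] (G : CADMG V) (hG : G.rnd = Set.univ)
    (A Y : Set V) (hdisj : Disjoint A Y)
    (D : Set V) (hD : (G.induce (G.Ystar A Y)).District D)
    (hni : ¬ G.Intrinsic D)
    (R : Set V) (hR : R = {d ∈ D | ∀ c ∈ D, ¬ G.dir d c})
    (C : Set V) (hC : G.IsReachableClosure D C) :
    G.CForest R D ∧ G.CForest R C ∧ D ⊂ C ∧ D ∩ A = ∅ ∧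
      (A ∩ (C \ D)).Nonempty ∧
      (∀ r ∈ R, ∃ y ∈ Y,
        Relation.ReflTransGen (fun a b => G.dir a b ∧ a ∉ A ∧ b ∉ A) r y) ∧
      G.Hedge Y A := by
  classical
  obtain ⟨v0, hv0, hDdef⟩ := hD
  set Ys := G.Ystar A Y with hYs
  have hv0D : v0 ∈ D := by rw [hDdef]; exact .refl
  have hYsA : ∀ x ∈ Ys, x ∉ A := by
    rintro x ⟨y, hy, hp⟩ hxA
    rcases hp.cases_head with h | ⟨c, hc, _⟩
    · exact Set.disjoint_left.mp hdisj hxA (h ▸ hy)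
    · exact hc.2.1 hxA
  have hDYs : D ⊆ Ys := by
    intro w hw
    have hw' : Relation.ReflTransGen (G.induce Ys).bi v0 w := by rw [hDdef] at hw; exact hw
    clear hw
    induction hw' with
    | refl => exact hv0.2
    | tail _ h _ => exact h.2.2
  have hDA : ∀ x ∈ D, x ∉ A := fun x hx => hYsA x (hDYs hx)
  -- D is bidirected-connected in G
  have hbiD : G.BiConnected D := by
    refine ⟨⟨v0, hv0D⟩, ?_⟩
    have key : ∀ a ∈ D,
        Relation.ReflTransGen (fun x y => G.bi x y ∧ x ∈ D ∧ y ∈ D) v0 a := by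
      intro a ha
      have ha' : Relation.ReflTransGen (G.induce Ys).bi v0 a := by rw [hDdef] at ha; exact ha
      refine Relation.ReflTransGen.mono ?_ _ _ (CADMG.rtg_within ha')
      rintro x y ⟨hxy, hx, hy⟩
      exact ⟨hxy.1, by rw [hDdef]; exact hx, by rw [hDdef]; exact hy⟩
    intro a ha b hb
    have hsym : Symmetric (fun x y => G.bi x y ∧ x ∈ D ∧ y ∈ D) :=
      fun x y h => ⟨G.bi_symm _ _ h.1, h.2.2, h.2.1⟩
    exact (((@Relation.ReflTransGen.stdSymm _ _ ⟨fun x y h => hsym h⟩).symm _ _) (key a ha)).trans (key b hb)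
  have hRD : R ⊆ D := by rw [hR]; exact fun x hx => hx.1
  -- every element of D has a directed path within D to a sink (element of R)
  have dsink : ∀ d, d ∈ D → ∃ r ∈ R,
      Relation.ReflTransGen (fun a b => G.dir a b ∧ a ∈ D ∧ b ∈ D) d r := by
    have ht : IsTrans V (fun x y =>
        Relation.TransGen (fun a b => G.dir a b ∧ a ∈ D ∧ b ∈ D) y x) :=
      ⟨fun a b c h1 h2 => h2.trans h1⟩
    have hi : IsIrrefl V (fun x y =>
        Relation.TransGen (fun a b => G.dir a b ∧ a ∈ D ∧ b ∈ D) y x) :=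
      ⟨fun a h => G.acyclic a (Relation.TransGen.mono (fun _ _ hh => hh.1) _ _ h)⟩
    have hwf := @Finite.wellFounded_of_trans_of_irrefl V _ _ ht hi
    intro d
    refine hwf.induction (C := fun x => x ∈ D → ∃ r ∈ R,
      Relation.ReflTransGen (fun a b => G.dir a b ∧ a ∈ D ∧ b ∈ D) x r) d ?_
    intro x ih hx
    by_cases hsink : ∀ c ∈ D, ¬ G.dir x c
    · exact ⟨x, by rw [hR]; exact ⟨hx, hsink⟩, .refl⟩
    · push_neg at hsink
      obtain ⟨c, hc, hxc⟩ := hsink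
      obtain ⟨r, hr, hp⟩ := ih c (Relation.TransGen.single ⟨hxc, hx, hc⟩) hc
      exact ⟨r, hr, hp.head ⟨hxc, hx, hc⟩⟩
  have cfD : G.CForest R D :=
    ⟨hRD, hbiD, fun a b => G.dir a b ∧ a ∈ D ∧ b ∈ D, fun a b h => h, dsink⟩
  have hnreach : ¬ G.Reachable D := fun h => hni ⟨h, hbiD⟩
  obtain ⟨hreachC, hDC, hmin⟩ := hC
  have hssub : D ⊂ C := by
    refine hDC.ssubset_of_ne (fun h => hnreach (h ▸ hreachC))
  -- T1 : bidirected component of v0 within C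
  have hT1D : D ⊆ {w | Relation.ReflTransGen (fun x y => G.bi x y ∧ x ∈ C ∧ y ∈ C) v0 w} := by
    intro d hd
    exact Relation.ReflTransGen.mono (fun a b h => ⟨h.1, hDC h.2.1, hDC h.2.2⟩) _ _ (hbiD.2 v0 hv0D d hd)
  have hT1C : {w | Relation.ReflTransGen (fun x y => G.bi x y ∧ x ∈ C ∧ y ∈ C) v0 w} ⊆ C := by
    intro w hw
    have hw' : Relation.ReflTransGen (fun x y => G.bi x y ∧ x ∈ C ∧ y ∈ C) v0 w := hw
    clear hw
    induction hw' with
    | refl => exact hDC hv0D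
    | tail _ h _ => exact h.2.2
  have hreachT1 : G.Reachable
      {w | Relation.ReflTransGen (fun x y => G.bi x y ∧ x ∈ C ∧ y ∈ C) v0 w} := by
    refine CADMG.reachable_down G hG C _ hT1C hreachC ?_
    intro S hTS hSC hMne
    obtain ⟨c, hcM, hsink⟩ := CADMG.exists_sink (fun a b => G.dir a b ∧ b ∈ S)
      (fun v h => G.acyclic v (Relation.TransGen.mono (fun _ _ hh => hh.1) _ _ h)) _ hMne
    refine ⟨c, hcM, ?_⟩
    rintro ⟨w, hw, hd, hb⟩
    have hwT1 : w ∉ {w | Relation.ReflTransGen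
        (fun x y => G.bi x y ∧ x ∈ C ∧ y ∈ C) v0 w} := by
      intro hwT1
      apply hcM.2
      have hsymS : Symmetric (fun a b => G.bi a b ∧ a ∈ S ∧ b ∈ S) :=
        fun x y h => ⟨G.bi_symm _ _ h.1, h.2.2, h.2.1⟩
      have hwc : Relation.ReflTransGen (fun a b => G.bi a b ∧ a ∈ S ∧ b ∈ S) w c :=
        ((@Relation.ReflTransGen.stdSymm _ _ ⟨fun x y h => hsymS h⟩).symm _ _) hb
      exact Relation.ReflTransGen.trans hwT1
        (Relation.ReflTransGen.mono (fun a b h => ⟨h.1, hSC h.2.1, hSC h.2.2⟩) _ _ hwc)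
    rcases Relation.reflTransGen_iff_eq_or_transGen.mp hd with h | htg
    · exact hw h
    · have hwS : w ∈ S := CADMG.transGen_last (P := fun x => x ∈ S) (fun a b h => h.2) htg
      exact hsink w ⟨hwS, hwT1⟩ htg
  have hCT1 : C ⊆ {w | Relation.ReflTransGen (fun x y => G.bi x y ∧ x ∈ C ∧ y ∈ C) v0 w} :=
    hmin _ hreachT1 hT1D
  have hbiC : G.BiConnected C := by
    refine ⟨⟨v0, hDC hv0D⟩, fun a ha b hb => ?_⟩
    have hsym : Symmetric (fun x y => G.bi x y ∧ x ∈ C ∧ y ∈ C) :=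
      fun x y h => ⟨G.bi_symm _ _ h.1, h.2.2, h.2.1⟩
    exact (((@Relation.ReflTransGen.stdSymm _ _ ⟨fun x y h => hsym h⟩).symm _ _) (hCT1 ha)).trans (hCT1 hb)
  -- T2 : vertices of C with a directed path within C to D
  have hDT2 : D ⊆ {c | c ∈ C ∧ ∃ d ∈ D,
      Relation.ReflTransGen (fun a b => G.dir a b ∧ a ∈ C ∧ b ∈ C) c d} :=
    fun d hd => ⟨hDC hd, d, hd, .refl⟩
  have hT2C : {c | c ∈ C ∧ ∃ d ∈ D,
      Relation.ReflTransGen (fun a b => G.dir a b ∧ a ∈ C ∧ b ∈ C) c d} ⊆ C :=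
    fun x hx => hx.1
  have hreachT2 : G.Reachable {c | c ∈ C ∧ ∃ d ∈ D,
      Relation.ReflTransGen (fun a b => G.dir a b ∧ a ∈ C ∧ b ∈ C) c d} := by
    refine CADMG.reachable_down G hG C _ hT2C hreachC ?_
    intro S hTS hSC hMne
    obtain ⟨c, hcM, hsink⟩ := CADMG.exists_sink (fun a b => G.dir a b ∧ b ∈ S)
      (fun v h => G.acyclic v (Relation.TransGen.mono (fun _ _ hh => hh.1) _ _ h)) _ hMne
    have hnoedge : ∀ b, ¬ (G.dir c b ∧ b ∈ S) := by
      rintro b ⟨hdir, hbS⟩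
      have hbT2 : b ∉ {c | c ∈ C ∧ ∃ d ∈ D,
          Relation.ReflTransGen (fun a b => G.dir a b ∧ a ∈ C ∧ b ∈ C) c d} := by
        intro hbT2
        obtain ⟨hbC, d, hd, hp⟩ := hbT2
        exact hcM.2 ⟨hSC hcM.1, d, hd, hp.head ⟨hdir, hSC hcM.1, hbC⟩⟩
      exact hsink b ⟨hbS, hbT2⟩ (Relation.TransGen.single ⟨hdir, hbS⟩)
    refine ⟨c, hcM, ?_⟩
    rintro ⟨w, hw, hd, _⟩
    rcases hd.cases_head with h | ⟨x, hx, _⟩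
    · exact hw h.symm
    · exact hnoedge x hx
  have hCT2 : C ⊆ {c | c ∈ C ∧ ∃ d ∈ D,
      Relation.ReflTransGen (fun a b => G.dir a b ∧ a ∈ C ∧ b ∈ C) c d} :=
    hmin _ hreachT2 hDT2
  have cfC : G.CForest R C := by
    refine ⟨fun x hx => hDC (hRD hx), hbiC,
      fun a b => G.dir a b ∧ a ∈ C ∧ b ∈ C, fun a b h => h, ?_⟩
    intro f hf
    obtain ⟨_, d, hd, hp⟩ := hCT2 hf
    obtain ⟨r, hr, hq⟩ := dsink d hd
    exact ⟨r, hr, hp.trans (Relation.ReflTransGen.mono (fun a b h => ⟨h.1, hDC h.2.1, hDC h.2.2⟩) _ _ hq)⟩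
  have hDAe : D ∩ A = ∅ :=
    Set.eq_empty_iff_forall_notMem.mpr (fun x hx => hDA x hx.1 hx.2)
  have hnA : (A ∩ (C \ D)).Nonempty := by
    by_contra hcon
    rw [Set.not_nonempty_iff_eq_empty] at hcon
    have hCA : ∀ x ∈ C, x ∉ A := by
      intro x hx hxA
      by_cases hxD : x ∈ D
      · exact hDA x hxD hxA
      · have hmem : x ∈ A ∩ (C \ D) := ⟨hxA, hx, hxD⟩
        rw [hcon] at hmem
        exact hmem
    have hCYs : C ⊆ Ys := by
      intro x hx
      obtain ⟨_, d, hd, hp⟩ := hCT2 hx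
      obtain ⟨y, hy, hq⟩ := hDYs hd
      exact ⟨y, hy, (Relation.ReflTransGen.mono (fun a b h => ⟨h.1, hCA _ h.2.1, hCA _ h.2.2⟩) _ _ hp).trans hq⟩
    obtain ⟨w, hwC, hwD⟩ := Set.exists_of_ssubset hssub
    apply hwD
    rw [hDdef]
    exact Relation.ReflTransGen.mono (fun a b h => ⟨h.1, hCYs h.2.1, hCYs h.2.2⟩) _ _ (hCT1 hwC)
  have hYpath : ∀ r ∈ R, ∃ y ∈ Y,
      Relation.ReflTransGen (fun a b => G.dir a b ∧ a ∉ A ∧ b ∉ A) r y :=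
    fun r hr => hDYs (hRD hr)
  exact ⟨cfD, cfC, hssub, hDAe, hnA, hYpath,
    R, D, C, cfD, cfC, hssub, hDAe, hnA, hYpath⟩
end

section
/- There exists an ADMG G(V) and disjoint subsets A, Y of V such that every district of the induced subgraph G_{Y*} is an intrinsic set of G(V) (so the ID algorithm identifies p(Y | do(a)) in G), and yet there exist subsets Y' ⊆ Y and A' ⊆ A for which a hedge for (Y', A') exists in G(V). Hence the hedge criterion of Corollary 3 of Shpitser and Pearl (2006) is false as stated. -/
/-- The counterexample graph: vertices `0, 1, 2`, directed edges `0 → 1 → 2`,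
bidirected edge `0 ↔ 1`. -/
def G3 : CADMG (Fin 3) where
  dir a b := (a = 0 ∧ b = 1) ∨ (a = 1 ∧ b = 2)
  bi a b := (a = 0 ∧ b = 1) ∨ (a = 1 ∧ b = 0)
  rnd := Set.univ
  acyclic := by
    intro v h
    have h' : Relation.TransGen (fun a b : Fin 3 => a < b) v v := by
      refine Relation.TransGen.mono ?_ v v h
      rintro a b (⟨rfl, rfl⟩ | ⟨rfl, rfl⟩) <;> decide
    have : Transitive (fun a b : Fin 3 => a < b) := fun _ _ _ => lt_trans
    rw [@Relation.transGen_eq_self _ _ ⟨this⟩] at h'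
    exact lt_irrefl v h'
  bi_symm := by rintro a b (⟨rfl, rfl⟩ | ⟨rfl, rfl⟩) <;> simp
  bi_irrefl := by rintro a (⟨rfl, h⟩ | ⟨rfl, h⟩) <;> exact absurd h (by decide)
  dir_rnd := fun _ _ _ => Set.mem_univ _
  bi_rnd := fun _ _ _ => ⟨Set.mem_univ _, Set.mem_univ _⟩

lemma G3_bi_from_one : ∀ w, Relation.ReflTransGen G3.bi 1 w → w = 0 ∨ w = 1 := by
  intro w h
  induction h with
  | refl => right; rfl
  | tail _ e ih =>
    rcases e with ⟨rfl, rfl⟩ | ⟨rfl, rfl⟩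
    · right; rfl
    · left; rfl

lemma G3_ystar : G3.Ystar {0, 1} {2} = {2} := by
  ext v
  constructor
  · rintro ⟨y, hy, hp⟩
    have hy2 : y = 2 := hy
    subst hy2
    induction hp using Relation.ReflTransGen.head_induction_on with
    | refl => rfl
    | head e _ _ =>
      rcases e with ⟨⟨rfl, _⟩ | ⟨rfl, _⟩, ha, _⟩ <;>
        exact absurd (by simp [Set.mem_insert_iff] : _) ha
  · rintro rfl
    exact ⟨2, rfl, Relation.ReflTransGen.refl⟩

/-- There is an ADMG `G` and disjoint `A`, `Y` such that every district of
`G_{Y*}` is intrinsic in `G` (so the ID algorithm identifies `p(Y | do(a))`), and yet a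
hedge for `(Y', A')` exists in `G` for some `Y' ⊆ Y`, `A' ⊆ A`.  Hence the hedge
criterion of Corollary 3 of Shpitser and Pearl (2006) is false as stated. -/
theorem corollary3_hedge_criterion_false :
    ∃ (V : Type) (_ : Fintype V) (G : CADMG V) (A Y : Set V),
      G.rnd = Set.univ ∧ Disjoint A Y ∧
      (∀ D, (G.induce (G.Ystar A Y)).District D → G.Intrinsic D) ∧
      ∃ Y' A' : Set V, Y' ⊆ Y ∧ A' ⊆ A ∧ G.Hedge Y' A' := by
  refine ⟨Fin 3, inferInstance, G3, {0, 1}, {2}, rfl, ?_, ?_, {2}, {0}, ?_, ?_, ?_⟩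
  · -- Disjointness of A and Y
    rw [Set.disjoint_left]
    rintro x (rfl | rfl) hx <;> simp at hx
  · -- every district of G_{Y*} is intrinsic
    rintro D ⟨v, hv, rfl⟩
    have hv2 : v = 2 := by
      have := hv.2
      rw [G3_ystar] at this
      exact this
    subst hv2
    have hD : {w | Relation.ReflTransGen (G3.induce (G3.Ystar {0, 1} {2})).bi 2 w}
        = ({2} : Set (Fin 3)) := by
      ext w
      simp only [Set.mem_setOf_eq, Set.mem_singleton_iff]
      constructor
      · intro h
        induction h with
        | refl => rfl
        | tail _ e ih =>
          subst ih
          rcases e with ⟨(⟨h2, _⟩ | ⟨h2, _⟩), _, _⟩ <;> exact absurd h2 (by decide)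
      · rintro rfl; exact Relation.ReflTransGen.refl
    rw [hD]
    constructor
    · -- reachable via the fixing sequence [1, 0]
      refine ⟨[1, 0], ⟨⟨Set.mem_univ _, ?_⟩, ⟨⟨⟨Set.mem_univ _, by decide⟩, ?_⟩, trivial⟩⟩, ?_⟩
      · -- 1 is fixable in G3
        rintro ⟨w, hw, hd, hb⟩
        have hbw : w = 0 ∨ w = 1 := G3_bi_from_one w hb
        have hdw : w = 1 ∨ w = 2 := by
          clear hb hbw hw
          induction hd with
          | refl => left; rfl
          | tail _ e ih =>
            rcases ih with rfl | rfl
            · rcases e with ⟨h1, rfl⟩ | ⟨_, rfl⟩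
              · exact absurd h1 (by decide)
              · right; rfl
            · rcases e with ⟨h1, _⟩ | ⟨h1, _⟩ <;> exact absurd h1 (by decide)
        rcases hbw with rfl | rfl
        · rcases hdw with h | h <;> exact absurd h (by decide)
        · exact hw rfl
      · -- 0 is fixable in G3.fix 1
        rintro ⟨w, hw, _, hb⟩
        have : w = 0 := by
          induction hb with
          | refl => rfl
          | tail _ e ih =>
            rcases e with ⟨(⟨rfl, rfl⟩ | ⟨rfl, rfl⟩), h1, h2⟩
            · exact absurd h2 (by simp)
            · exact absurd h1 (by simp)
        exact hw this
      · intro v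
        fin_cases v <;> simp [G3]
    · -- {2} is bidirected connected
      exact ⟨⟨2, rfl⟩, by rintro a rfl b rfl; exact Relation.ReflTransGen.refl⟩
  · -- Y' ⊆ Y
    exact le_refl _
  · -- A' ⊆ A
    intro x hx; exact Or.inl hx
  · -- the hedge for (Y', A') = ({2}, {0})
    refine ⟨{1}, {1}, {0, 1}, ?_, ?_, ?_, ?_, ?_, ?_⟩
    · -- F = {1} is a {1}-rooted C-forest
      refine ⟨le_refl _, ⟨⟨1, rfl⟩, by rintro a rfl b rfl; exact Relation.ReflTransGen.refl⟩,
        fun _ _ => False, fun a b h => h.elim, ?_⟩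
      rintro f rfl
      exact ⟨1, rfl, Relation.ReflTransGen.refl⟩
    · -- F' = {0, 1} is a {1}-rooted C-forest
      refine ⟨fun x hx => Or.inr hx, ⟨⟨0, Or.inl rfl⟩, ?_⟩,
        fun x y => x = 0 ∧ y = 1, ?_, ?_⟩
      · rintro a (rfl | rfl) b (rfl | rfl)
        · exact Relation.ReflTransGen.refl
        · exact Relation.ReflTransGen.single
            ⟨Or.inl ⟨rfl, rfl⟩, Or.inl rfl, Or.inr rfl⟩
        · exact Relation.ReflTransGen.single
            ⟨Or.inr ⟨rfl, rfl⟩, Or.inr rfl, Or.inl rfl⟩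
        · exact Relation.ReflTransGen.refl
      · rintro a b ⟨rfl, rfl⟩
        exact ⟨Or.inl ⟨rfl, rfl⟩, Or.inl rfl, Or.inr rfl⟩
      · rintro f (rfl | rfl)
        · exact ⟨1, rfl, Relation.ReflTransGen.single ⟨rfl, rfl⟩⟩
        · exact ⟨1, rfl, Relation.ReflTransGen.refl⟩
    · -- F ⊊ F'
      constructor
      · intro x hx; exact Or.inr hx
      · intro h
        have h0 : (0 : Fin 3) ∈ ({1} : Set (Fin 3)) := h (Or.inl rfl)
        simp at h0
    · -- F ∩ A' = ∅
      ext x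
      simp only [Set.mem_inter_iff, Set.mem_singleton_iff, Set.mem_empty_iff_false,
        iff_false, not_and]
      rintro rfl h; exact absurd h (by decide)
    · -- A' ∩ (F' \ F) nonempty
      exact ⟨0, rfl, Or.inl rfl, by simp⟩
    · -- every root reaches Y' avoiding A'
      rintro r rfl
      exact ⟨2, rfl, Relation.ReflTransGen.single
        ⟨Or.inr ⟨rfl, rfl⟩, by simp, by simp⟩⟩
end
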